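/- Consider the fully discrete scheme with σ = 1: M-periodic sequences m^n, m^*, u^n, u^*, ρ^n, ρ^* satisfy (m_i^* - m_i^n)/(τ/2) + [(m_{i+1}^* u_{i+1}^* - m_{i-1}^* u_{i-1}^*) + m_i^*(u_{i+1}^* - u_{i-1}^*)]/(2h) = A(u_{i+1}^* - u_{i-1}^*)/(2h) - μ(u_{i+2}^* - 2u_{i+1}^* + 2u_{i-1}^* - u_{i-2}^*)/(2h³) - (1-2ΩA)[(ρ_{i+1}^*)² - (ρ_{i-1}^*)²]/(4h) + (Ω/(2h)) ρ_i^*[(u_{i+1}^*+u_i^*)(ρ_{i+1}^*+ρ_i^*) - (u_{i-1}^*+u_i^*)(ρ_{i-1}^*+ρ_i^*)], together with the continuity equation (ρ_i^* - ρ_i^n)/(τ/2) + [(u_{i+1}^*+u_i^*)(ρ_{i+1}^*+ρ_i^*) - (u_{i-1}^*+u_i^*)(ρ_{i-1}^*+ρ_i^*)]/(4h) = 0, the relation m_i^n = u_i^n - (v_{i+1}^n - v_{i-1}^n)/(2h) with v_i^n = (u_{i+1}^n - u_{i-1}^n)/(2h) at both levels n and n+1 (and level *), and updates u_i^{n+1}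 = 2u_i^* - u_i^n, m_i^{n+1} = 2m_i^* - m_i^n, ρ_i^{n+1} = 2ρ_i^* - ρ_i^n. Then the discrete momentum I₂^n = ∑_{i=1}^{M} [u_i^n + Ω(ρ_i^n)²] satisfies I₂^{n+1} = I₂^n. -/

import Mathlib

open Finset

lemma per_shift_up (M : ℤ) (hM : 1 ≤ M) (f : ℤ → ℝ) (hf : ∀ i, f (i + M) = f i) :
    ∑ i ∈ Icc (1:ℤ) M, f (i + 1) = ∑ i ∈ Icc (1:ℤ) M, f i := by
  have h1 : ∑ i ∈ Icc (1:ℤ) M, f (i + 1) = ∑ i ∈ Icc (2:ℤ) (M+1), f i := by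
    have h := Finset.sum_map (Icc (1:ℤ) M) (addRightEmbedding 1) f
    rw [Finset.map_add_right_Icc] at h
    simp only [addRightEmbedding_apply] at h
    norm_num at h
    exact h.symm
  have e1 : Icc (1:ℤ) (M+1) = insert (1:ℤ) (Icc 2 (M+1)) := by
    ext x; simp only [Finset.mem_Icc, Finset.mem_insert]; omega
  have e2 : Icc (1:ℤ) (M+1) = insert (M+1) (Icc (1:ℤ) M) := by
    ext x; simp only [Finset.mem_Icc, Finset.mem_insert]; omega
  have n1 : (1:ℤ) ∉ Icc (2:ℤ) (M+1) := by simp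
  have n2 : M+1 ∉ Icc (1:ℤ) M := by simp
  have s1 : ∑ x ∈ Icc (1:ℤ) (M+1), f x = f 1 + ∑ x ∈ Icc (2:ℤ) (M+1), f x := by
    rw [e1, Finset.sum_insert n1]
  have s2 : ∑ x ∈ Icc (1:ℤ) (M+1), f x = f (M+1) + ∑ x ∈ Icc (1:ℤ) M, f x := by
    rw [e2, Finset.sum_insert n2]
  have hf1 : f (M+1) = f 1 := by rw [show M+1 = 1+M by ring, hf]
  rw [h1]; linarith

lemma per_shift_down (M : ℤ) (hM : 1 ≤ M) (f : ℤ → ℝ) (hf : ∀ i, f (i + M) = f i) :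
    ∑ i ∈ Icc (1:ℤ) M, f (i - 1) = ∑ i ∈ Icc (1:ℤ) M, f i := by
  have hg : ∀ i, (fun j => f (j - 1)) (i + M) = (fun j => f (j - 1)) i := by
    intro i; simp only; rw [show i + M - 1 = (i-1) + M by ring, hf]
  have h := per_shift_up M hM (fun j => f (j - 1)) hg
  simp only [add_sub_cancel_right] at h
  exact h.symm

lemma per_diff (M : ℤ) (hM : 1 ≤ M) (f : ℤ → ℝ) (hf : ∀ i, f (i + M) = f i) :
    ∑ i ∈ Icc (1:ℤ) M, (f (i + 1) - f (i - 1)) = 0 := by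
  rw [Finset.sum_sub_distrib, per_shift_up M hM f hf, per_shift_down M hM f hf, sub_self]

lemma per_prod (M : ℤ) (hM : 1 ≤ M) (f : ℤ → ℝ) (hf : ∀ i, f (i + M) = f i) :
    ∑ i ∈ Icc (1:ℤ) M, f i * (f (i + 1) - f (i - 1)) = 0 := by
  have h1 : ∑ i ∈ Icc (1:ℤ) M, f i * (f (i + 1) - f (i - 1))
      = ∑ i ∈ Icc (1:ℤ) M, (f i * f (i + 1) - f i * f (i - 1)) :=
    Finset.sum_congr rfl fun i _ => by ring
  have hg : ∀ i, (fun j => f j * f (j + 1)) (i + M) = (fun j => f j * f (j + 1)) i := by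
    intro i; simp only; rw [show i + M + 1 = (i+1) + M by ring, hf, hf]
  have h2 := per_shift_down M hM (fun j => f j * f (j + 1)) hg
  have h3 : ∑ i ∈ Icc (1:ℤ) M, f i * f (i - 1) = ∑ i ∈ Icc (1:ℤ) M, f i * f (i + 1) := by
    rw [← h2]
    refine Finset.sum_congr rfl fun i _ => ?_
    show f i * f (i - 1) = f (i - 1) * f (i - 1 + 1)
    rw [show i - 1 + 1 = i by ring, mul_comm]
  rw [h1, Finset.sum_sub_distrib, h3, sub_self]

theorem fully_discrete_momentum_conservation (M : ℤ) (hM : 1 ≤ M) (τ h A μ Ω : ℝ)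
    (hτ : 0 < τ) (hh : 0 < h)
    (un us un1 ρn ρs ρn1 mn ms mn1 vn vs vn1 : ℤ → ℝ)
    (hper_un : ∀ i, un (i + M) = un i) (hper_us : ∀ i, us (i + M) = us i)
    (hper_ρn : ∀ i, ρn (i + M) = ρn i) (hper_ρs : ∀ i, ρs (i + M) = ρs i)
    (hper_mn : ∀ i, mn (i + M) = mn i) (hper_ms : ∀ i, ms (i + M) = ms i)
    (hmomentum : ∀ i, (ms i - mn i) / (τ / 2)
      + ((ms (i + 1) * us (i + 1) - ms (i - 1) * us (i - 1))
          + ms i * (us (i + 1) - us (i - 1))) / (2 * h)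
      = A * (us (i + 1) - us (i - 1)) / (2 * h)
        - μ * (us (i + 2) - 2 * us (i + 1) + 2 * us (i - 1) - us (i - 2)) / (2 * h ^ 3)
        - (1 - 2 * Ω * A) * ((ρs (i + 1)) ^ 2 - (ρs (i - 1)) ^ 2) / (4 * h)
        + (Ω / (2 * h)) * ρs i * ((us (i + 1) + us i) * (ρs (i + 1) + ρs i)
          - (us (i - 1) + us i) * (ρs (i - 1) + ρs i)))
    (hcontinuity : ∀ i, (ρs i - ρn i) / (τ / 2)
      + ((us (i + 1) + us i) * (ρs (i + 1) + ρs i)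
        - (us (i - 1) + us i) * (ρs (i - 1) + ρs i)) / (4 * h) = 0)
    (hvn : ∀ i, vn i = (un (i + 1) - un (i - 1)) / (2 * h))
    (hmn : ∀ i, mn i = un i - (vn (i + 1) - vn (i - 1)) / (2 * h))
    (hvs : ∀ i, vs i = (us (i + 1) - us (i - 1)) / (2 * h))
    (hms : ∀ i, ms i = us i - (vs (i + 1) - vs (i - 1)) / (2 * h))
    (hvn1 : ∀ i, vn1 i = (un1 (i + 1) - un1 (i - 1)) / (2 * h))
    (hmn1 : ∀ i, mn1 i = un1 i - (vn1 (i + 1) - vn1 (i - 1)) / (2 * h))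
    (hupd_u : ∀ i, un1 i = 2 * us i - un i)
    (hupd_m : ∀ i, mn1 i = 2 * ms i - mn i)
    (hupd_ρ : ∀ i, ρn1 i = 2 * ρs i - ρn i) :
    ∑ i ∈ Finset.Icc (1 : ℤ) M, (un1 i + Ω * (ρn1 i) ^ 2)
    = ∑ i ∈ Finset.Icc (1 : ℤ) M, (un i + Ω * (ρn i) ^ 2) := by
  have hh' : h ≠ 0 := ne_of_gt hh
  have hτ2 : (τ/2 : ℝ) ≠ 0 := by positivity
  have h4h : (4*h : ℝ) ≠ 0 := by positivity
  have hper_vs : ∀ i, vs (i + M) = vs i := by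
    intro i
    rw [hvs, hvs, show i + M + 1 = (i+1) + M by ring, show i + M - 1 = (i-1) + M by ring,
      hper_us, hper_us]
  have hper_vn : ∀ i, vn (i + M) = vn i := by
    intro i
    rw [hvn, hvn, show i + M + 1 = (i+1) + M by ring, show i + M - 1 = (i-1) + M by ring,
      hper_un, hper_un]
  have Z1 : ∑ i ∈ Icc (1:ℤ) M, (us (i+1) - us (i-1)) = 0 := per_diff M hM us hper_us
  have Z3 : ∑ i ∈ Icc (1:ℤ) M, ((ρs (i+1))^2 - (ρs (i-1))^2) = 0 :=
    per_diff M hM (fun j => ρs j ^ 2) (fun i => by rw [hper_ρs])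
  have Z4 : ∑ i ∈ Icc (1:ℤ) M, (ms (i+1) * us (i+1) - ms (i-1) * us (i-1)) = 0 :=
    per_diff M hM (fun j => ms j * us j) (fun i => by rw [hper_ms, hper_us])
  have Z5 : ∑ i ∈ Icc (1:ℤ) M, us i * (us (i+1) - us (i-1)) = 0 := per_prod M hM us hper_us
  have Z6 : ∑ i ∈ Icc (1:ℤ) M, vs i * (vs (i+1) - vs (i-1)) = 0 := per_prod M hM vs hper_vs
  have Z7 : ∑ i ∈ Icc (1:ℤ) M, (vs (i+1) - vs (i-1)) = 0 := per_diff M hM vs hper_vs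
  have Z8 : ∑ i ∈ Icc (1:ℤ) M, (vn (i+1) - vn (i-1)) = 0 := per_diff M hM vn hper_vn
  have Z2 : ∑ i ∈ Icc (1:ℤ) M, (us (i+2) - us (i-2)) = 0 := by
    have hg : ∀ i, (fun j => us (j+1) + us (j-1)) (i + M) = (fun j => us (j+1) + us (j-1)) i := by
      intro i; simp only
      rw [show i + M + 1 = (i+1)+M by ring, show i + M - 1 = (i-1)+M by ring, hper_us, hper_us]
    have h := per_diff M hM (fun j => us (j+1) + us (j-1)) hg
    rw [← h]
    refine Finset.sum_congr rfl fun i _ => ?_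
    show us (i+2) - us (i-2) = (us (i+1+1) + us (i+1-1)) - (us (i-1+1) + us (i-1-1))
    rw [show i+1+1 = i+2 by ring, show i+1-1 = i by ring, show i-1+1 = i by ring,
      show i-1-1 = i-2 by ring]
    ring
  have key : ∀ i, (un1 i + Ω * (ρn1 i) ^ 2) - (un i + Ω * (ρn i) ^ 2)
      = (τ*A/(2*h) + τ*μ/(h^3)) * (us (i+1) - us (i-1))
      + (-(τ*μ/(2*h^3))) * (us (i+2) - us (i-2))
      + (-(τ*(1-2*Ω*A)/(4*h))) * ((ρs (i+1))^2 - (ρs (i-1))^2)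
      + (-(τ/(2*h))) * (ms (i+1) * us (i+1) - ms (i-1) * us (i-1))
      + (-(τ/(2*h))) * (us i * (us (i+1) - us (i-1)))
      + (τ/(2*h)) * (vs i * (vs (i+1) - vs (i-1)))
      + (1/h) * (vs (i+1) - vs (i-1))
      + (-(1/h)) * (vn (i+1) - vn (i-1)) := by
    intro i
    have hm0 : (ms i - mn i) / (τ/2)
        = (A * (us (i + 1) - us (i - 1)) / (2 * h)
        - μ * (us (i + 2) - 2 * us (i + 1) + 2 * us (i - 1) - us (i - 2)) / (2 * h ^ 3)
        - (1 - 2 * Ω * A) * ((ρs (i + 1)) ^ 2 - (ρs (i - 1)) ^ 2) / (4 * h)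
        + (Ω / (2 * h)) * ρs i * ((us (i + 1) + us i) * (ρs (i + 1) + ρs i)
          - (us (i - 1) + us i) * (ρs (i - 1) + ρs i)))
        - ((ms (i + 1) * us (i + 1) - ms (i - 1) * us (i - 1))
          + ms i * (us (i + 1) - us (i - 1))) / (2 * h) := by
      linarith [hmomentum i]
    have hm1 := (div_eq_iff hτ2).mp hm0
    have hc0 : (ρs i - ρn i) / (τ/2)
        = -(((us (i + 1) + us i) * (ρs (i + 1) + ρs i)
          - (us (i - 1) + us i) * (ρs (i - 1) + ρs i)) / (4*h)) := by
      linarith [hcontinuity i]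
    have hc2 := (div_eq_iff hτ2).mp hc0
    rw [hupd_u i, hupd_ρ i]
    linear_combination (2:ℝ) * hm1 + (4*Ω*ρs i) * hc2
      + (-2 - τ*(us (i+1) - us (i-1))/(2*h)) * hms i + (2:ℝ) * hmn i
      + (-(τ*(vs (i+1) - vs (i-1))/(2*h))) * hvs i
  have hsum : ∑ i ∈ Icc (1:ℤ) M,
      ((un1 i + Ω * (ρn1 i) ^ 2) - (un i + Ω * (ρn i) ^ 2)) = 0 := by
    rw [Finset.sum_congr rfl (fun i _ => key i)]
    simp only [Finset.sum_add_distrib, ← Finset.mul_sum]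
    rw [Z1, Z2, Z3, Z4, Z5, Z6, Z7, Z8]
    ring
  rw [Finset.sum_sub_distrib] at hsum
  linarith
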